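/- The q → 0 limit of the theta-ratio with fractional shift: for 0 < q < 1 real, x > 0, z > 0, and w ∈ ℝ \ ℤ, the limit as q → 0⁺ of θ(z·x·q^w)/θ(x·q^w) equals z^{-⌊w⌋ - 1/2}, where θ(x) = (x^{1/2} - x^{-1/2})∏_{i≥1}(1-q^i x)(1-q^i/x). -/

import Mathlib

open Real Filter Topology

/-- The real theta function
`θ_q(x) = (x^{1/2} - x^{-1/2}) ∏_{i≥1} (1 - qⁱ x)(1 - qⁱ/x)`. -/
noncomputable def thetaR (q x : ℝ) : ℝ :=
  (Real.sqrt x - 1 / Real.sqrt x) *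
    ∏' i : ℕ, (1 - q ^ (i + 1) * x) * (1 - q ^ (i + 1) / x)

section Aux

/-! ### Auxiliary lemmas -/

/-- The tail sum of logarithms. -/
noncomputable def tailSum (d E q : ℝ) : ℝ := ∑' i : ℕ, Real.log (1 - d * q ^ (E + (i : ℝ)))

private lemma tprod_split {f : ℕ → ℝ} {T : ℝ} (N : ℕ) (h : HasProd (fun i => f (i + N)) T) :
    ∏' i, f i = (∏ i ∈ Finset.range N, f i) * T := by
  have h1 : HasProd (f ∘ (Subtype.val) : (↑(Finset.range N) : Set ℕ) → ℝ)
      (∏ i ∈ Finset.range N, f i) := (Finset.range N).hasProd f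
  have h2' : HasProd (fun x : {n // n ∉ Finset.range N} => f x) T := by
    rw [← (notMemRangeEquiv N).symm.hasProd_iff]
    have e : ((fun x : {n // n ∉ Finset.range N} => f x) ∘ (notMemRangeEquiv N).symm)
        = fun j => f (j + N) := by
      funext j; simp [coe_notMemRangeEquiv_symm]
    rw [e]; exact h
  have h2 : HasProd (f ∘ (Subtype.val) : ((↑(Finset.range N) : Set ℕ)ᶜ : Set ℕ) → ℝ) T := h2'
  exact (h1.mul_compl h2).tprod_eq

private lemma abs_log_one_sub_le {u : ℝ} (h0 : 0 ≤ u) (h : u ≤ 1/2) :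
    |Real.log (1 - u)| ≤ 2 * u := by
  have h1 : (0:ℝ) < 1 - u := by linarith
  rw [abs_of_nonpos (Real.log_nonpos (by linarith) (by linarith))]
  have h2 := Real.log_le_sub_one_of_pos (inv_pos.mpr h1)
  rw [Real.log_inv] at h2
  have h3 : (1-u)⁻¹ - 1 ≤ 2 * u := by
    rw [inv_eq_one_div, div_sub' h1.ne', div_le_iff₀ h1]
    nlinarith
  linarith

private lemma term_bound {d E q : ℝ} (hd : 0 < d) (hq0 : 0 < q) (hq1 : q < 1)
    (hsmall : d * q ^ E ≤ 1/2) (i : ℕ) :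
    0 ≤ d * q ^ (E + (i:ℝ)) ∧ d * q ^ (E + (i:ℝ)) ≤ (d * q ^ E) * q ^ (i:ℕ) ∧
      d * q ^ (E + (i:ℝ)) ≤ 1/2 := by
  have hqE : (0:ℝ) < q ^ E := Real.rpow_pos_of_pos hq0 _
  have hrw : q ^ (E + (i:ℝ)) = q ^ E * q ^ (i:ℕ) := by
    rw [Real.rpow_add hq0, Real.rpow_natCast]
  have hqi1 : q ^ (i:ℕ) ≤ 1 := pow_le_one₀ hq0.le hq1.le
  refine ⟨by positivity, ?_, ?_⟩
  · rw [hrw]; ring_nf; exact le_refl _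
  · rw [hrw, ← mul_assoc]
    calc d * q ^ E * q ^ (i:ℕ) ≤ d * q ^ E * 1 :=
          mul_le_mul_of_nonneg_left hqi1 (by positivity)
      _ ≤ 1/2 := by rw [mul_one]; exact hsmall

private lemma summable_log_tail {d E q : ℝ} (hd : 0 < d) (hq0 : 0 < q) (hq1 : q < 1)
    (hsmall : d * q ^ E ≤ 1/2) :
    Summable fun i : ℕ => Real.log (1 - d * q ^ (E + (i:ℝ))) := by
  apply Summable.of_norm_bounded (g := fun i : ℕ => 2 * (d * q ^ E) * q ^ (i:ℕ))
  · exact (summable_geometric_of_lt_one hq0.le hq1).mul_left _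
  · intro i
    obtain ⟨h0, h1, h2⟩ := term_bound hd hq0 hq1 hsmall i
    calc ‖Real.log (1 - d * q ^ (E + (i:ℝ)))‖ ≤ 2 * (d * q ^ (E + (i:ℝ))) :=
          abs_log_one_sub_le h0 h2
      _ ≤ 2 * (d * q ^ E * q ^ (i:ℕ)) := by linarith
      _ = 2 * (d * q ^ E) * q ^ (i:ℕ) := by ring

private lemma hasProd_of_summable_log {f : ℕ → ℝ} (hpos : ∀ i, 0 < f i)
    (hsum : Summable fun i => Real.log (f i)) :
    HasProd f (Real.exp (∑' i, Real.log (f i))) := by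
  have h := hsum.hasSum.rexp
  have he : (Real.exp ∘ fun i => Real.log (f i)) = f := by
    funext i; simp [Real.exp_log (hpos i)]
  rwa [he] at h

private lemma hasProd_tail {d E q : ℝ} (hd : 0 < d) (hq0 : 0 < q) (hq1 : q < 1)
    (hsmall : d * q ^ E ≤ 1/2) :
    HasProd (fun i : ℕ => 1 - d * q ^ (E + (i:ℝ))) (Real.exp (tailSum d E q)) :=
  hasProd_of_summable_log
    (fun i => by have := (term_bound hd hq0 hq1 hsmall i).2.2; linarith)
    (summable_log_tail hd hq0 hq1 hsmall)

private lemma tendsto_rpow_zero {p : ℝ} (hp : 0 < p) :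
    Tendsto (fun q : ℝ => q ^ p) (nhdsWithin 0 (Set.Ioi 0)) (nhds 0) := by
  have h := (Real.continuousAt_rpow_const 0 p (Or.inr hp.le)).tendsto
  rw [Real.zero_rpow hp.ne'] at h
  exact h.mono_left nhdsWithin_le_nhds

private lemma tailSum_tendsto {d E : ℝ} (hd : 0 < d) (hE : 0 < E) :
    Tendsto (fun q => tailSum d E q) (nhdsWithin 0 (Set.Ioi 0)) (nhds 0) := by
  have hev : ∀ᶠ q : ℝ in nhdsWithin 0 (Set.Ioi 0), d * q ^ E < 1/2 := by
    have h2 := (tendsto_rpow_zero hE).const_mul d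
    rw [mul_zero] at h2
    exact h2 (Iio_mem_nhds (by norm_num))
  obtain ⟨δ, hδpos, hδ⟩ := ((nhdsGT_basis (0:ℝ)).eventually_iff).mp hev
  set δ₀ : ℝ := min (δ/2) (1/2) with hδ₀def
  have hδ₀pos : 0 < δ₀ := by positivity
  have hδ₀lt : δ₀ < 1 := lt_of_le_of_lt (min_le_right _ _) (by norm_num)
  have hδ₀mem : δ₀ ∈ Set.Ioo 0 δ := ⟨hδ₀pos, lt_of_le_of_lt (min_le_left _ _) (by linarith)⟩
  have hδ₀small : d * δ₀ ^ E < 1/2 := hδ hδ₀mem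
  have key := tendsto_tsum_of_dominated_convergence
    (f := fun (q : ℝ) (i : ℕ) => Real.log (1 - d * q ^ (E + (i:ℝ))))
    (g := fun _ : ℕ => (0:ℝ))
    (bound := fun i : ℕ => 2 * (d * δ₀ ^ E) * δ₀ ^ i)
    (((summable_geometric_of_lt_one hδ₀pos.le hδ₀lt).mul_left _))
    (fun i => by
      have h1 : Tendsto (fun q : ℝ => 1 - d * q ^ (E + (i:ℝ)))
          (nhdsWithin 0 (Set.Ioi 0)) (nhds 1) := by
        have := ((tendsto_rpow_zero (by positivity : (0:ℝ) < E + (i:ℝ))).const_mul d).const_sub 1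
        rwa [mul_zero, sub_zero] at this
      have h2 := ((Real.continuousAt_log one_ne_zero).tendsto).comp h1
      rwa [Real.log_one] at h2)
    ?_
  · rw [tsum_zero] at key
    exact key
  · filter_upwards [Ioo_mem_nhdsGT_of_mem ⟨le_refl (0:ℝ), hδ₀pos⟩] with q hq
    intro i
    obtain ⟨hq0, hqδ⟩ := hq
    have hqE : q ^ (E + (i:ℝ)) = q ^ E * q ^ (i:ℕ) := by
      rw [Real.rpow_add hq0, Real.rpow_natCast]
    have hqEδ : q ^ E ≤ δ₀ ^ E := Real.rpow_le_rpow hq0.le hqδ.le hE.le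
    have hqiδ : q ^ (i:ℕ) ≤ δ₀ ^ (i:ℕ) := pow_le_pow_left₀ hq0.le hqδ.le i
    have hpos : (0:ℝ) ≤ d * q ^ (E + (i:ℝ)) := by positivity
    have hle : d * q ^ (E + (i:ℝ)) ≤ d * δ₀ ^ E * δ₀ ^ i := by
      rw [hqE, ← mul_assoc]
      exact mul_le_mul (mul_le_mul_of_nonneg_left hqEδ hd.le) hqiδ
        (pow_nonneg hq0.le i) (by positivity)
    have hhalf : d * q ^ (E + (i:ℝ)) ≤ 1/2 := by
      have h5 : d * δ₀ ^ E * δ₀ ^ i ≤ d * δ₀ ^ E * 1 :=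
        mul_le_mul_of_nonneg_left (pow_le_one₀ hδ₀pos.le hδ₀lt.le) (by positivity)
      rw [mul_one] at h5
      linarith
    calc ‖Real.log (1 - d * q ^ (E + (i:ℝ)))‖ ≤ 2 * (d * q ^ (E + (i:ℝ))) :=
          abs_log_one_sub_le hpos hhalf
      _ ≤ 2 * (d * δ₀ ^ E) * δ₀ ^ i := by rw [mul_assoc]; linarith

private lemma theta_eq (c w : ℝ) (hc : 0 < c) (N : ℕ) {q : ℝ} (hq0 : 0 < q) (hq1 : q < 1)
    (hA : 0 < (N:ℝ)+1+w) (hB : 0 < (N:ℝ)+1-w)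
    (h1 : c * q ^ ((N:ℝ)+1+w) ≤ 1/2) (h2 : c⁻¹ * q ^ ((N:ℝ)+1-w) ≤ 1/2) :
    thetaR q (c * q ^ w) =
      (Real.sqrt (c*q^w) - 1/Real.sqrt (c*q^w)) *
      ((∏ i ∈ Finset.range N, (1 - q^(i+1) * (c*q^w)) * (1 - q^(i+1) / (c*q^w)))
       * (Real.exp (tailSum c ((N:ℝ)+1+w) q) * Real.exp (tailSum c⁻¹ ((N:ℝ)+1-w) q))) := by
  rw [thetaR]
  congr 1
  apply tprod_split N
  have hfun : (fun i : ℕ => (1 - q^(i+N+1) * (c*q^w)) * (1 - q^(i+N+1) / (c*q^w)))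
      = fun i : ℕ => (1 - c * q ^ (((N:ℝ)+1+w) + (i:ℝ))) *
          (1 - c⁻¹ * q ^ (((N:ℝ)+1-w) + (i:ℝ))) := by
    funext i
    have hnp : (q:ℝ)^(i+N+1) = q ^ ((i:ℝ)+(N:ℝ)+1) := by
      rw [show ((i:ℝ)+(N:ℝ)+1) = ((i+N+1 : ℕ) : ℝ) by push_cast; ring, Real.rpow_natCast]
    have e1 : q^(i+N+1) * (c*q^w) = c * q ^ (((N:ℝ)+1+w) + (i:ℝ)) := by
      rw [hnp, show ((N:ℝ)+1+w) + (i:ℝ) = ((i:ℝ)+(N:ℝ)+1) + w by ring,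
        Real.rpow_add hq0 ((i:ℝ)+(N:ℝ)+1) w]
      ring
    have e2 : q^(i+N+1) / (c*q^w) = c⁻¹ * q ^ (((N:ℝ)+1-w) + (i:ℝ)) := by
      rw [hnp, show ((N:ℝ)+1-w) + (i:ℝ) = ((i:ℝ)+(N:ℝ)+1) - w by ring,
        Real.rpow_sub hq0 ((i:ℝ)+(N:ℝ)+1) w]
      rw [div_eq_mul_inv, mul_inv, div_eq_mul_inv]
      have : (q:ℝ) ^ w ≠ 0 := (Real.rpow_pos_of_pos hq0 w).ne'
      field_simp
    rw [e1, e2]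
  show HasProd (fun i : ℕ => (1 - q^(i+N+1) * (c*q^w)) * (1 - q^(i+N+1) / (c*q^w))) _
  rw [hfun]
  exact (hasProd_tail hc hq0 hq1 h1).mul (hasProd_tail (inv_pos.mpr hc) hq0 hq1 h2)

private lemma pref_ratio {c₁ c₂ t : ℝ} (h1 : 0 < c₁) (h2 : 0 < c₂) (ht : 0 < t) :
    (Real.sqrt (c₁*t) - 1/Real.sqrt (c₁*t)) / (Real.sqrt (c₂*t) - 1/Real.sqrt (c₂*t)) =
      ((c₁*t - 1)/(c₂*t - 1)) * (Real.sqrt c₂ / Real.sqrt c₁) := by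
  have e : ∀ u : ℝ, 0 < u → Real.sqrt u - 1/Real.sqrt u = (u-1)/Real.sqrt u := by
    intro u hu
    have hsu : Real.sqrt u ≠ 0 := (Real.sqrt_pos.mpr hu).ne'
    rw [eq_div_iff hsu, sub_mul, one_div, inv_mul_cancel₀ hsu, Real.mul_self_sqrt hu.le]
  have hst : Real.sqrt t ≠ 0 := (Real.sqrt_pos.mpr ht).ne'
  have hs1 : Real.sqrt c₁ ≠ 0 := (Real.sqrt_pos.mpr h1).ne'
  have hs2 : Real.sqrt c₂ ≠ 0 := (Real.sqrt_pos.mpr h2).ne'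
  rw [e _ (mul_pos h1 ht), e _ (mul_pos h2 ht), Real.sqrt_mul h1.le, Real.sqrt_mul h2.le,
    div_div_div_comm]
  congr 1
  rw [mul_div_mul_right _ _ hst, div_div_eq_mul_div, mul_div_assoc]

private lemma factor_ratio {c₁ c₂ q : ℝ} (w : ℝ) (h1 : c₁ ≠ 0) (h2 : c₂ ≠ 0)
    (hq : 0 < q) (i : ℕ) :
    ((1 - q^(i+1) * (c₁*q^w)) * (1 - q^(i+1) / (c₁*q^w))) /
      ((1 - q^(i+1) * (c₂*q^w)) * (1 - q^(i+1) / (c₂*q^w)))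
    = ((1 - c₁*q^((i:ℝ)+1+w))/(1 - c₂*q^((i:ℝ)+1+w))) *
        ((q^(w-(i:ℝ)-1) - c₁⁻¹)/(q^(w-(i:ℝ)-1) - c₂⁻¹)) := by
  have hnp : (q:ℝ)^(i+1) = q ^ ((i:ℝ)+1) := by
    rw [show ((i:ℝ)+1) = ((i+1 : ℕ) : ℝ) by push_cast; ring, Real.rpow_natCast]
  have ea : ∀ c : ℝ, q^(i+1) * (c*q^w) = c * q ^ ((i:ℝ)+1+w) := by
    intro c
    rw [hnp, Real.rpow_add hq ((i:ℝ)+1) w]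
    ring
  have eb : ∀ c : ℝ, c ≠ 0 → q^(i+1) / (c*q^w) = c⁻¹ * q ^ ((i:ℝ)+1-w) := by
    intro c hc
    rw [hnp, Real.rpow_sub hq ((i:ℝ)+1) w, div_eq_mul_inv, mul_inv, div_eq_mul_inv]
    have : (q:ℝ) ^ w ≠ 0 := (Real.rpow_pos_of_pos hq w).ne'
    field_simp
  have hone : q ^ ((i:ℝ)+1-w) * q ^ (w-(i:ℝ)-1) = 1 := by
    rw [← Real.rpow_add hq, show ((i:ℝ)+1-w) + (w-(i:ℝ)-1) = 0 by ring, Real.rpow_zero]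
  have ec : ∀ c : ℝ, 1 - c⁻¹ * q ^ ((i:ℝ)+1-w)
      = q ^ ((i:ℝ)+1-w) * (q^(w-(i:ℝ)-1) - c⁻¹) := by
    intro c
    rw [mul_sub, hone]
    ring
  rw [ea c₁, ea c₂, eb c₁ h1, eb c₂ h2, ec c₁, ec c₂, mul_div_mul_comm,
    mul_div_mul_left _ _ (Real.rpow_pos_of_pos hq _).ne']

private lemma theta_inv (q y : ℝ) (hy : 0 < y) : thetaR q y⁻¹ = - thetaR q y := by
  unfold thetaR
  have h2 : ∏' i : ℕ, (1 - q^(i+1) * y⁻¹) * (1 - q^(i+1) / y⁻¹)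
      = ∏' i : ℕ, (1 - q^(i+1) * y) * (1 - q^(i+1) / y) := by
    apply tprod_congr
    intro i
    rw [div_eq_mul_inv, div_eq_mul_inv, inv_inv]
    ring
  rw [h2, Real.sqrt_inv, one_div, inv_inv]
  have : (Real.sqrt y)⁻¹ - Real.sqrt y = -(Real.sqrt y - 1/Real.sqrt y) := by
    rw [one_div]; ring
  rw [this, neg_mul]

end Aux

section MainPos

private lemma main_pos (x z w : ℝ) (hx : 0 < x) (hz : 0 < z) (hw0 : 0 < w)
    (hw : ∀ n : ℤ, w ≠ n) :
    Tendsto (fun q : ℝ => thetaR q (z * x * q ^ w) / thetaR q (x * q ^ w))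
      (nhdsWithin 0 (Set.Ioi 0)) (nhds (z ^ (-(⌊w⌋ : ℝ) - 1 / 2))) := by
  set l := nhdsWithin (0:ℝ) (Set.Ioi 0) with hl
  set M : ℕ := ⌊w⌋.toNat with hM
  have hfloor_nonneg : 0 ≤ ⌊w⌋ := Int.floor_nonneg.mpr hw0.le
  have hMfloor : (M:ℤ) = ⌊w⌋ := Int.toNat_of_nonneg hfloor_nonneg
  have hMr : (M:ℝ) = (⌊w⌋:ℝ) := by exact_mod_cast congrArg (Int.cast : ℤ → ℝ) hMfloor
  have hMlt : (M:ℝ) < w := by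
    rw [hMr]
    rcases lt_or_eq_of_le (Int.floor_le w) with h | h
    · exact h
    · exact absurd h.symm (hw ⌊w⌋)
  have hMub : w < (M:ℝ) + 1 := by rw [hMr]; exact Int.lt_floor_add_one w
  have hA : 0 < (M:ℝ)+1+w := by linarith
  have hB : 0 < (M:ℝ)+1-w := by linarith
  have hzx : 0 < z*x := mul_pos hz hx
  -- smallness events
  have hsm : ∀ d Ep : ℝ, 0 < d → 0 < Ep → ∀ᶠ q : ℝ in l, d * q ^ Ep ≤ 1/2 := by
    intro d Ep hd hEp
    have h2 := (tendsto_rpow_zero hEp).const_mul d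
    rw [mul_zero] at h2
    filter_upwards [h2 (Iio_mem_nhds (by norm_num : (0:ℝ) < 1/2))] with q hq using le_of_lt hq
  have hq01 : ∀ᶠ q : ℝ in l, 0 < q ∧ q < 1 := by
    filter_upwards [Ioo_mem_nhdsGT_of_mem (Set.mem_Ico.mpr ⟨le_refl (0:ℝ), one_pos⟩)] with q hq
    exact ⟨hq.1, hq.2⟩
  -- the limit of the explicit form
  have tq : Tendsto (fun q : ℝ => q ^ w) l (nhds 0) := tendsto_rpow_zero hw0
  have hpref : Tendsto (fun q : ℝ => ((z*x*q^w - 1)/(x*q^w - 1)) *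
      (Real.sqrt x / Real.sqrt (z*x))) l
      (nhds (Real.sqrt x / Real.sqrt (z*x))) := by
    have h1 : Tendsto (fun q : ℝ => z*x*q^w - 1) l (nhds (-1)) := by
      have := (tq.const_mul (z*x)).sub_const 1
      rwa [mul_zero, zero_sub] at this
    have h2 : Tendsto (fun q : ℝ => x*q^w - 1) l (nhds (-1)) := by
      have := (tq.const_mul x).sub_const 1
      rwa [mul_zero, zero_sub] at this
    have h3 := (h1.div h2 (by norm_num)).mul_const (Real.sqrt x / Real.sqrt (z*x))
    have h4 : ((-1:ℝ))/(-1) * (Real.sqrt x / Real.sqrt (z*x))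
        = Real.sqrt x / Real.sqrt (z*x) := by norm_num
    rwa [h4] at h3
  have hfac : ∀ i ∈ Finset.range M, Tendsto (fun q : ℝ =>
      ((1 - z*x*q^((i:ℝ)+1+w))/(1 - x*q^((i:ℝ)+1+w))) *
        ((q^(w-(i:ℝ)-1) - (z*x)⁻¹)/(q^(w-(i:ℝ)-1) - x⁻¹))) l (nhds z⁻¹) := by
    intro i hi
    have hiM : (i:ℝ) + 1 ≤ (M:ℝ) := by exact_mod_cast Nat.succ_le_of_lt (Finset.mem_range.mp hi)
    have ha : (0:ℝ) < (i:ℝ)+1+w := by linarith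
    have he : (0:ℝ) < w-(i:ℝ)-1 := by linarith
    have n1 : Tendsto (fun q : ℝ => 1 - z*x*q^((i:ℝ)+1+w)) l (nhds 1) := by
      have := ((tendsto_rpow_zero ha).const_mul (z*x)).const_sub 1
      rwa [mul_zero, sub_zero] at this
    have d1 : Tendsto (fun q : ℝ => 1 - x*q^((i:ℝ)+1+w)) l (nhds 1) := by
      have := ((tendsto_rpow_zero ha).const_mul x).const_sub 1
      rwa [mul_zero, sub_zero] at this
    have n2 : Tendsto (fun q : ℝ => q^(w-(i:ℝ)-1) - (z*x)⁻¹) l (nhds (-(z*x)⁻¹)) := by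
      have := (tendsto_rpow_zero he).sub_const (z*x)⁻¹
      rwa [zero_sub] at this
    have d2 : Tendsto (fun q : ℝ => q^(w-(i:ℝ)-1) - x⁻¹) l (nhds (-x⁻¹)) := by
      have := (tendsto_rpow_zero he).sub_const x⁻¹
      rwa [zero_sub] at this
    have hden2 : (-x⁻¹ : ℝ) ≠ 0 := neg_ne_zero.mpr (inv_ne_zero hx.ne')
    have hcomb := (n1.div d1 one_ne_zero).mul (n2.div d2 hden2)
    have hval : (1:ℝ)/1 * ((-(z*x)⁻¹)/(-x⁻¹)) = z⁻¹ := by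
      rw [neg_div_neg_eq, div_one, one_mul, mul_inv]
      field_simp
    rwa [hval] at hcomb
  have hprod : Tendsto (fun q : ℝ => ∏ i ∈ Finset.range M,
      (((1 - z*x*q^((i:ℝ)+1+w))/(1 - x*q^((i:ℝ)+1+w))) *
        ((q^(w-(i:ℝ)-1) - (z*x)⁻¹)/(q^(w-(i:ℝ)-1) - x⁻¹)))) l
      (nhds ((z⁻¹)^M)) := by
    have := tendsto_finset_prod (Finset.range M) hfac
    rwa [Finset.prod_const, Finset.card_range] at this
  have hEx : Tendsto (fun q : ℝ =>
      (Real.exp (tailSum (z*x) ((M:ℝ)+1+w) q) * Real.exp (tailSum (z*x)⁻¹ ((M:ℝ)+1-w) q)) /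
      (Real.exp (tailSum x ((M:ℝ)+1+w) q) * Real.exp (tailSum x⁻¹ ((M:ℝ)+1-w) q))) l
      (nhds 1) := by
    have t1 := (tailSum_tendsto hzx hA).rexp
    have t2 := (tailSum_tendsto (inv_pos.mpr hzx) hB).rexp
    have t3 := (tailSum_tendsto hx hA).rexp
    have t4 := (tailSum_tendsto (inv_pos.mpr hx) hB).rexp
    rw [Real.exp_zero] at t1 t2 t3 t4
    have := (t1.mul t2).div (t3.mul t4) (by norm_num)
    rwa [mul_one, div_one] at this
  have Hbig := (hpref.mul hprod).mul hEx
  rw [mul_one] at Hbig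
  -- value identification
  have hval : Real.sqrt x / Real.sqrt (z*x) * (z⁻¹)^M = z ^ (-(⌊w⌋:ℝ) - 1/2) := by
    have hsx : Real.sqrt x ≠ 0 := (Real.sqrt_pos.mpr hx).ne'
    have hsz : Real.sqrt z ≠ 0 := (Real.sqrt_pos.mpr hz).ne'
    have e1 : Real.sqrt x / Real.sqrt (z*x) = (Real.sqrt z)⁻¹ := by
      rw [Real.sqrt_mul hz.le, div_eq_iff (by positivity)]
      field_simp
    have e2 : -(⌊w⌋:ℝ) - 1/2 = (-(M:ℝ)) + (-(1/2:ℝ)) := by rw [← hMr]; ring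
    rw [e1, e2, Real.rpow_add hz, Real.rpow_neg hz.le, Real.rpow_natCast,
      Real.rpow_neg hz.le, ← Real.sqrt_eq_rpow, inv_pow]
    ring
  rw [hval] at Hbig
  -- eventual equality
  refine Tendsto.congr' ?_ Hbig
  filter_upwards [hq01, hsm (z*x) ((M:ℝ)+1+w) hzx hA, hsm (z*x)⁻¹ ((M:ℝ)+1-w) (inv_pos.mpr hzx) hB,
    hsm x ((M:ℝ)+1+w) hx hA, hsm x⁻¹ ((M:ℝ)+1-w) (inv_pos.mpr hx) hB] with q hq hs1 hs2 hs3 hs4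
  obtain ⟨hq0, hq1⟩ := hq
  have hqw : 0 < q ^ w := Real.rpow_pos_of_pos hq0 w
  symm
  rw [theta_eq (z*x) w hzx M hq0 hq1 hA hB hs1 hs2,
    theta_eq x w hx M hq0 hq1 hA hB hs3 hs4, mul_div_mul_comm, mul_div_mul_comm,
    pref_ratio hzx hx hqw]
  have hprodeq : (∏ i ∈ Finset.range M, ((1 - q^(i+1) * (z*x*q^w)) * (1 - q^(i+1) / (z*x*q^w))))
      / (∏ i ∈ Finset.range M, ((1 - q^(i+1) * (x*q^w)) * (1 - q^(i+1) / (x*q^w))))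
      = ∏ i ∈ Finset.range M, (((1 - z*x*q^((i:ℝ)+1+w))/(1 - x*q^((i:ℝ)+1+w))) *
        ((q^(w-(i:ℝ)-1) - (z*x)⁻¹)/(q^(w-(i:ℝ)-1) - x⁻¹))) := by
    rw [← Finset.prod_div_distrib]
    exact Finset.prod_congr rfl (fun i _ => factor_ratio w hzx.ne' hx.ne' hq0 i)
  rw [hprodeq]
  ring

end MainPos

/-- The `q → 0⁺` limit of the theta ratio with a fractional shift `w ∉ ℤ`:
`lim_{q→0⁺} θ_q(z x q^w)/θ_q(x q^w) = z^{-⌊w⌋ - 1/2}`. -/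
theorem theta_ratio_limit_fractional (x z w : ℝ) (hx : 0 < x) (hz : 0 < z)
    (hw : ∀ n : ℤ, w ≠ n) :
    Tendsto (fun q : ℝ => thetaR q (z * x * q ^ w) / thetaR q (x * q ^ w))
      (nhdsWithin 0 (Set.Ioi 0)) (nhds (z ^ (-(⌊w⌋ : ℝ) - 1 / 2))) := by
  have hw0 : w ≠ 0 := by simpa using hw 0
  rcases hw0.lt_or_gt with hneg | hpos
  · -- reduce to positive case via θ(1/y) = -θ(y)
    have hw' : ∀ n : ℤ, -w ≠ n := by
      intro n h
      apply hw (-n)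
      push_cast
      linarith
    have H := main_pos x⁻¹ z⁻¹ (-w) (inv_pos.mpr hx) (inv_pos.mpr hz) (by linarith) hw'
    have hfloor : ⌊-w⌋ = -⌊w⌋ - 1 := by
      have h1 : (⌊w⌋:ℝ) < w := by
        rcases lt_or_eq_of_le (Int.floor_le w) with h | h
        · exact h
        · exact absurd h.symm (hw ⌊w⌋)
      have h2 : w < (⌊w⌋:ℝ) + 1 := Int.lt_floor_add_one w
      apply Int.floor_eq_iff.mpr
      constructor
      · push_cast; linarith
      · push_cast; linarith
    have hvaleq : (z⁻¹) ^ (-(⌊-w⌋:ℝ) - 1/2) = z ^ (-(⌊w⌋:ℝ) - 1/2) := by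
      rw [hfloor, Real.inv_rpow hz.le, ← Real.rpow_neg hz.le]
      congr 1
      push_cast
      ring
    rw [hvaleq] at H
    refine Tendsto.congr' ?_ H
    filter_upwards [self_mem_nhdsWithin] with q hq0
    have hq0' : (0:ℝ) < q := hq0
    have harg1 : z⁻¹ * x⁻¹ * q ^ (-w) = (z * x * q ^ w)⁻¹ := by
      rw [Real.rpow_neg hq0'.le, mul_inv, mul_inv]
    have harg2 : x⁻¹ * q ^ (-w) = (x * q ^ w)⁻¹ := by
      rw [Real.rpow_neg hq0'.le, mul_inv]
    rw [harg1, harg2, theta_inv q _ (by positivity), theta_inv q _ (by positivity),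
      neg_div_neg_eq]
  · exact main_pos x z w hx hz hpos hw
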